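/- Let I : ℝ → [0,+∞] be lower semicontinuous and let İ denote its convex hull, İ(s) := sup{ φ(s) : φ : ℝ → (−∞,+∞] convex with φ ≤ I pointwise }. Then the convex hull of the zero set I^{-1}({0}) is contained in İ^{-1}({0}); and if İ^{-1}({0}) = [a,b] for some real numbers a ≤ b (i.e., the zero set of İ is a nonempty compact interval), then I(a) = 0 and I(b) = 0, so that the convex hull of I^{-1}({0}) equals İ^{-1}({0}). -/

import Mathlib

open scoped ENNReal

/-- The defining set of minorant values at a point. -/
private def minorantSet (I : ℝ → ℝ≥0∞) (s : ℝ) : Set EReal :=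
  {a : EReal | ∃ φ : ℝ → EReal,
        (∀ t : ℝ, φ t ≠ ⊥)
        ∧ (∀ x y p q : ℝ, 0 ≤ p → 0 ≤ q → p + q = 1 →
            φ (p * x + q * y) ≤ (p : EReal) * φ x + (q : EReal) * φ y)
        ∧ (∀ t : ℝ, φ t ≤ (I t : EReal))
        ∧ a = φ s}

private lemma zero_mem_minorantSet (I : ℝ → ℝ≥0∞) (s : ℝ) :
    (0 : EReal) ∈ minorantSet I s := by
  refine ⟨fun _ => 0, fun t => by simp, ?_, fun t => EReal.coe_ennreal_nonneg _, rfl⟩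
  intro x y p q hp hq hpq
  simp

private lemma ereal_mul_nonpos {q : ℝ} (hq : 0 ≤ q) {x : EReal} (hx : x ≠ ⊥)
    (hx0 : x ≤ 0) : (q : EReal) * x ≤ 0 := by
  have hxt : x ≠ ⊤ := by
    intro h
    rw [h] at hx0
    exact absurd hx0 (by simp)
  set r : ℝ := x.toReal with hr
  have hxr : (r : EReal) = x := EReal.coe_toReal hxt hx
  have hr0 : r ≤ 0 := by
    rw [← EReal.coe_le_coe_iff, hxr]
    exact_mod_cast hx0
  calc (q : EReal) * x = ((q * r : ℝ) : EReal) := by rw [EReal.coe_mul, hxr]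
    _ ≤ ((0 : ℝ) : EReal) := by
        exact_mod_cast mul_nonpos_iff.mpr (Or.inl ⟨hq, hr0⟩)
    _ = 0 := by simp

/-- Core lemma: left endpoint of the zero interval of the convex hull is a zero of `I`. -/
private lemma left_endpoint_zero (I : ℝ → ℝ≥0∞) (hIlsc : LowerSemicontinuous I)
    (brevI : ℝ → EReal)
    (hbrev : ∀ s : ℝ, brevI s = sSup (minorantSet I s))
    (a b : ℝ) (hab : a ≤ b)
    (hzero : {s : ℝ | brevI s = 0} = Set.Icc a b) : I a = 0 := by
  by_contra hIa
  have hIapos : 0 < I a := pos_iff_ne_zero.mpr hIa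
  -- a positive level strictly below I a
  set c0 : ℝ≥0∞ := min (I a) 1 / 2 with hc0def
  have hminpos : (0 : ℝ≥0∞) < min (I a) 1 := lt_min hIapos one_pos
  have hminne : min (I a) 1 ≠ ⊤ := ne_top_of_le_ne_top ENNReal.one_ne_top (min_le_right _ _)
  have hc0ltmin : c0 < min (I a) 1 := ENNReal.half_lt_self hminpos.ne' hminne
  have hc0lt : c0 < I a := lt_of_lt_of_le hc0ltmin (min_le_left _ _)
  have hc0pos : 0 < c0 := by
    rw [hc0def]
    exact ENNReal.half_pos hminpos.ne'
  have hc0ne : c0 ≠ ⊤ := ne_top_of_lt hc0ltmin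
  set c : ℝ := c0.toReal with hcdef
  have hcpos : 0 < c := ENNReal.toReal_pos hc0pos.ne' hc0ne
  have hcc0 : ((c : ℝ) : EReal) = (c0 : EReal) := by
    have h1 : ((c0 : EReal)).toReal = c := EReal.toReal_coe_ennreal
    rw [← h1]
    exact EReal.coe_toReal (by simp [hc0ne]) (by simp)
  -- lower semicontinuity gives a ball where I > c0
  have hev : ∀ᶠ t in nhds a, c0 < I t := hIlsc a c0 hc0lt
  rw [Metric.eventually_nhds_iff] at hev
  obtain ⟨δ0, hδ0, hball⟩ := hev
  set δ : ℝ := δ0 / 2 with hδdef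
  have hδpos : 0 < δ := half_pos hδ0
  have hIball : ∀ t : ℝ, |t - a| ≤ δ → ((c : ℝ) : EReal) ≤ (I t : EReal) := by
    intro t ht
    have h1 : c0 < I t := hball (by rw [Real.dist_eq]; linarith [abs_le.mp ht, hδ0]; )
    rw [hcc0]
    exact le_of_lt (EReal.coe_ennreal_lt_coe_ennreal_iff.mpr h1)
  -- brevI is nonnegative
  have hnonneg : ∀ s : ℝ, (0 : EReal) ≤ brevI s := by
    intro s
    rw [hbrev s]
    exact le_sSup (zero_mem_minorantSet I s)
  -- brevI a = 0
  have hbreva : brevI a = 0 := by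
    have : a ∈ Set.Icc a b := Set.mem_Icc.mpr ⟨le_rfl, hab⟩
    rw [← hzero] at this
    exact this
  -- brevI (a - δ) > 0
  have hm0 : (0 : EReal) < brevI (a - δ) := by
    refine (hnonneg _).lt_of_ne (fun h => ?_)
    have : a - δ ∈ Set.Icc a b := by
      rw [← hzero]; exact h.symm
    have := (Set.mem_Icc.mp this).1
    linarith
  obtain ⟨z, hz0, hzlt⟩ := exists_between hm0
  have hztop : z ≠ ⊤ := ne_top_of_lt hzlt
  have hzbot : z ≠ ⊥ := ne_bot_of_gt hz0
  set m : ℝ := z.toReal with hmdef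
  have hmz : ((m : ℝ) : EReal) = z := EReal.coe_toReal hztop hzbot
  have hmpos : 0 < m := by
    rw [← EReal.coe_lt_coe_iff]
    rw [hmz]
    exact_mod_cast hz0
  -- get a convex minorant φ0 with φ0 (a - δ) > m
  rw [hbrev (a - δ), lt_sSup_iff] at hzlt
  obtain ⟨v, hvmem, hvlt⟩ := hzlt
  obtain ⟨φ0, hb0, hconv0, hle0, rfl⟩ := hvmem
  have hφ0big : ((m : ℝ) : EReal) < φ0 (a - δ) := hmz ▸ hvlt
  -- φ0 a ≤ 0
  have hφ0a : φ0 a ≤ 0 := by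
    have hmem : φ0 a ∈ minorantSet I a := ⟨φ0, hb0, hconv0, hle0, rfl⟩
    have := le_sSup hmem
    rw [← hbrev a, hbreva] at this
    exact this
  -- Key lower bound on I to the left of a - δ
  have hkey : ∀ t : ℝ, t ≤ a - δ → ((m * (a - t) / δ : ℝ) : EReal) ≤ (I t : EReal) := by
    intro t ht
    have hat : δ ≤ a - t := by linarith
    have hatpos : 0 < a - t := lt_of_lt_of_le hδpos hat
    set p : ℝ := δ / (a - t) with hpdef
    set q : ℝ := (a - δ - t) / (a - t) with hqdef
    have hppos : 0 < p := div_pos hδpos hatpos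
    have hq : 0 ≤ q := div_nonneg (by linarith) hatpos.le
    have hpq : p + q = 1 := by
      rw [hpdef, hqdef, ← add_div, div_eq_one_iff_eq hatpos.ne']
      ring
    have hcomb : p * t + q * a = a - δ := by
      rw [hpdef, hqdef]
      field_simp
      ring
    have h1 : φ0 (a - δ) ≤ (p : EReal) * φ0 t + (q : EReal) * φ0 a := by
      have := hconv0 t a p q hppos.le hq hpq
      rwa [hcomb] at this
    have h2 : (q : EReal) * φ0 a ≤ 0 := ereal_mul_nonpos hq (hb0 a) hφ0a
    have h3 : ((m : ℝ) : EReal) < (p : EReal) * φ0 t := by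
      calc ((m : ℝ) : EReal) < φ0 (a - δ) := hφ0big
        _ ≤ (p : EReal) * φ0 t + (q : EReal) * φ0 a := h1
        _ ≤ (p : EReal) * φ0 t + 0 := add_le_add_right h2 _
        _ = (p : EReal) * φ0 t := add_zero _
    rcases eq_or_ne (φ0 t) ⊤ with htop | hne
    · have : (I t : EReal) = ⊤ := top_le_iff.mp (htop ▸ hle0 t)
      rw [this]; exact le_top
    · set r : ℝ := (φ0 t).toReal with hrdef
      have hrφ : ((r : ℝ) : EReal) = φ0 t := EReal.coe_toReal hne (hb0 t)
      have h4 : (m : ℝ) < p * r := by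
        rw [← EReal.coe_lt_coe_iff, EReal.coe_mul, hrφ]
        exact h3
      have h5 : m * (a - t) / δ ≤ r := by
        rw [div_le_iff₀ hδpos]
        rw [hpdef] at h4
        have h6 : m * (a - t) < δ * r := by
          have := (lt_div_iff₀ hatpos).mp (by rw [div_mul_eq_mul_div] at h4; exact h4)
          linarith
        linarith
      calc ((m * (a - t) / δ : ℝ) : EReal) ≤ ((r : ℝ) : EReal) :=
            EReal.coe_le_coe_iff.mpr h5
        _ = φ0 t := hrφ
        _ ≤ (I t : EReal) := hle0 t
  -- build the linear minorant witnessing brevI a > 0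
  set ε : ℝ := min (c / 2) (m / 2) with hεdef
  have hεpos : 0 < ε := lt_min (half_pos hcpos) (half_pos hmpos)
  have hεc : 2 * ε ≤ c := by
    have := min_le_left (c / 2) (m / 2); rw [← hεdef] at this; linarith
  have hεm : 2 * ε ≤ m := by
    have := min_le_right (c / 2) (m / 2); rw [← hεdef] at this; linarith
  set R : ℝ → ℝ := fun t => ε * (1 - (t - a) / δ) with hRdef
  have hmemb : ((R a : ℝ) : EReal) ∈ minorantSet I a := by
    refine ⟨fun t => ((R t : ℝ) : EReal), fun t => by simp, ?_, ?_, rfl⟩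
    · intro x y p q hp hq hpq
      rw [← EReal.coe_mul, ← EReal.coe_mul, ← EReal.coe_add]
      apply EReal.coe_le_coe_iff.mpr
      have : R (p * x + q * y) = p * R x + q * R y := by
        simp only [hRdef]
        rw [show p = 1 - q from by linarith]
        field_simp
        ring
      rw [this]
    · intro t
      rcases le_or_gt t (a - δ) with hL | hR1
      · -- far left
        have h1 : 1 ≤ (a - t) / δ := (one_le_div hδpos).mpr (by linarith)
        have h2 : R t ≤ m * (a - t) / δ := by
          simp only [hRdef]
          have h3 : ε * (1 - (t - a) / δ) = ε * (1 + (a - t) / δ) := by ring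
          rw [h3]
          have h4 : ε * (1 + (a - t) / δ) ≤ ε * (2 * ((a - t) / δ)) := by
            apply mul_le_mul_of_nonneg_left (by linarith) hεpos.le
          calc ε * (1 + (a - t) / δ) ≤ ε * (2 * ((a - t) / δ)) := h4
            _ = (2 * ε) * ((a - t) / δ) := by ring
            _ ≤ m * ((a - t) / δ) := by
                apply mul_le_mul_of_nonneg_right hεm
                positivity
            _ = m * (a - t) / δ := by ring
        calc ((R t : ℝ) : EReal) ≤ ((m * (a - t) / δ : ℝ) : EReal) :=
              EReal.coe_le_coe_iff.mpr h2
          _ ≤ (I t : EReal) := hkey t hL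
      rcases le_or_gt t (a + δ) with hR2 | hR3
      · -- middle ball
        have h1 : R t ≤ c := by
          simp only [hRdef]
          have h2 : (t - a) / δ ≥ -1 := by
            rw [ge_iff_le, neg_le, ← neg_div]
            apply div_le_one_of_le₀ (by linarith) hδpos.le
          nlinarith [hεpos.le]
        have h3 : |t - a| ≤ δ := abs_le.mpr ⟨by linarith, by linarith⟩
        calc ((R t : ℝ) : EReal) ≤ ((c : ℝ) : EReal) := EReal.coe_le_coe_iff.mpr h1
          _ ≤ (I t : EReal) := hIball t h3
      · -- far right
        have h1 : R t ≤ 0 := by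
          simp only [hRdef]
          have h2 : 1 ≤ (t - a) / δ := (one_le_div hδpos).mpr (by linarith)
          nlinarith [hεpos.le]
        calc ((R t : ℝ) : EReal) ≤ ((0 : ℝ) : EReal) := EReal.coe_le_coe_iff.mpr h1
          _ = (0 : EReal) := by simp
          _ ≤ (I t : EReal) := EReal.coe_ennreal_nonneg _
  have hcontra : ((R a : ℝ) : EReal) ≤ brevI a := by
    rw [hbrev a]
    exact le_sSup hmemb
  rw [hbreva] at hcontra
  have hRa : R a = ε := by simp only [hRdef]; simp
  rw [hRa] at hcontra
  have : ε ≤ 0 := by exact_mod_cast hcontra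
  linarith

theorem convex_hull_zero_set_rate_function
    (I : ℝ → ℝ≥0∞) (hIlsc : LowerSemicontinuous I)
    (brevI : ℝ → EReal)
    (hbrev : ∀ s : ℝ, brevI s = sSup {a : EReal | ∃ φ : ℝ → EReal,
        (∀ t : ℝ, φ t ≠ ⊥)
        ∧ (∀ x y p q : ℝ, 0 ≤ p → 0 ≤ q → p + q = 1 →
            φ (p * x + q * y) ≤ (p : EReal) * φ x + (q : EReal) * φ y)
        ∧ (∀ t : ℝ, φ t ≤ (I t : EReal))
        ∧ a = φ s}) :
    convexHull ℝ (I ⁻¹' {0}) ⊆ {s : ℝ | brevI s = 0}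
    ∧ ∀ a b : ℝ, a ≤ b → {s : ℝ | brevI s = 0} = Set.Icc a b →
        I a = 0 ∧ I b = 0 ∧ convexHull ℝ (I ⁻¹' {0}) = Set.Icc a b := by
  have hbrev' : ∀ s : ℝ, brevI s = sSup (minorantSet I s) := hbrev
  have hnonneg : ∀ s : ℝ, (0 : EReal) ≤ brevI s := fun s => by
    rw [hbrev' s]; exact le_sSup (zero_mem_minorantSet I s)
  have hle : ∀ s : ℝ, brevI s ≤ (I s : EReal) := by
    intro s
    rw [hbrev' s]
    apply sSup_le
    rintro v ⟨φ, hb, hc, hl, rfl⟩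
    exact hl s
  -- the zero set of brevI is convex
  have hconvex : Convex ℝ {s : ℝ | brevI s = 0} := by
    intro x hx y hy p q hp hq hpq
    have hx0 : brevI x = 0 := hx
    have hy0 : brevI y = 0 := hy
    refine le_antisymm ?_ (hnonneg _)
    show brevI (p • x + q • y) ≤ 0
    simp only [smul_eq_mul]
    rw [hbrev' (p * x + q * y)]
    apply sSup_le
    rintro v ⟨φ, hb, hc, hl, rfl⟩
    have hφx : φ x ≤ 0 := by
      have : φ x ≤ brevI x := by
        rw [hbrev' x]; exact le_sSup ⟨φ, hb, hc, hl, rfl⟩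
      rwa [hx0] at this
    have hφy : φ y ≤ 0 := by
      have : φ y ≤ brevI y := by
        rw [hbrev' y]; exact le_sSup ⟨φ, hb, hc, hl, rfl⟩
      rwa [hy0] at this
    calc φ (p * x + q * y) ≤ (p : EReal) * φ x + (q : EReal) * φ y := hc x y p q hp hq hpq
      _ ≤ 0 + 0 := add_le_add (ereal_mul_nonpos hp (hb x) hφx)
          (ereal_mul_nonpos hq (hb y) hφy)
      _ = 0 := add_zero _
  -- part 1
  have hsubset : convexHull ℝ (I ⁻¹' {0}) ⊆ {s : ℝ | brevI s = 0} := by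
    apply convexHull_min ?_ hconvex
    intro s hs
    have hs0 : I s = 0 := hs
    refine le_antisymm ?_ (hnonneg s)
    calc brevI s ≤ (I s : EReal) := hle s
      _ = 0 := by rw [hs0]; exact EReal.coe_ennreal_zero
  refine ⟨hsubset, ?_⟩
  intro a b hab hzero
  -- I a = 0 via the core lemma
  have hIa : I a = 0 := left_endpoint_zero I hIlsc brevI hbrev' a b hab hzero
  -- I b = 0 via reflection
  have hIb : I b = 0 := by
    set I' : ℝ → ℝ≥0∞ := fun t => I (-t) with hI'def
    set brevI' : ℝ → EReal := fun s => brevI (-s) with hbrevI'def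
    have hIlsc' : LowerSemicontinuous I' := by
      have := LowerSemicontinuous.comp hIlsc (continuous_neg : Continuous (fun t : ℝ => -t))
      exact this
    have hbrevI'' : ∀ s : ℝ, brevI' s = sSup (minorantSet I' s) := by
      intro s
      rw [hbrevI'def]
      simp only
      rw [hbrev' (-s)]
      congr 1
      ext v
      constructor
      · rintro ⟨φ, hb, hc, hl, rfl⟩
        refine ⟨fun t => φ (-t), fun t => hb (-t), ?_, fun t => hl (-t), ?_⟩
        · intro x y p q hp hq hpq
          show φ (-(p * x + q * y)) ≤ (p : EReal) * φ (-x) + (q : EReal) * φ (-y)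
          rw [show -(p * x + q * y) = p * (-x) + q * (-y) from by ring]
          exact hc (-x) (-y) p q hp hq hpq
        · rfl
      · rintro ⟨φ, hb, hc, hl, rfl⟩
        refine ⟨fun t => φ (-t), fun t => hb (-t), ?_, ?_, ?_⟩
        · intro x y p q hp hq hpq
          show φ (-(p * x + q * y)) ≤ (p : EReal) * φ (-x) + (q : EReal) * φ (-y)
          rw [show -(p * x + q * y) = p * (-x) + q * (-y) from by ring]
          exact hc (-x) (-y) p q hp hq hpq
        · intro t
          show φ (-t) ≤ (I t : EReal)
          have h := hl (-t)
          rwa [show I' (-t) = I t from by rw [hI'def]; simp] at h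
        · show φ s = φ (- -s)
          rw [neg_neg]
    have hzero' : {s : ℝ | brevI' s = 0} = Set.Icc (-b) (-a) := by
      ext s
      have h1 := Set.ext_iff.mp hzero (-s)
      simp only [Set.mem_setOf_eq, Set.mem_Icc] at h1 ⊢
      rw [hbrevI'def]
      simp only
      rw [h1]
      constructor
      · rintro ⟨h2, h3⟩; exact ⟨by linarith, by linarith⟩
      · rintro ⟨h2, h3⟩; exact ⟨by linarith, by linarith⟩
    have := left_endpoint_zero I' hIlsc' brevI' hbrevI'' (-b) (-a) (by linarith) hzero'
    rw [hI'def] at this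
    simpa using this
  refine ⟨hIa, hIb, ?_⟩
  apply Set.Subset.antisymm
  · rw [← hzero]; exact hsubset
  · rw [← segment_eq_Icc hab]
    exact (convex_convexHull ℝ (I ⁻¹' {0})).segment_subset
      (subset_convexHull ℝ _ hIa) (subset_convexHull ℝ _ hIb)
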